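/- Let A be an abelian category in which injective hulls exist. Let N be an object with injective hull E such that the quotient U = E/N is an artinian object. If Ext¹_A(T, N) = 0 for every simple object T of A, then N is injective (equivalently, N = E). -/

import Mathlib

open CategoryTheory CategoryTheory.Limits

universe v u

/-- Let `A` be an abelian category in which injective hulls exist.  Let `N` be an object
with injective hull `i : N ⟶ E` (an essential monomorphism into an injective) such that
`U = E/N` is artinian.  If `Ext¹(T, N) = 0` for every simple `T` (i.e. every short exact
sequence `0 → N → Z → T → 0` with `T` simple splits), then `N` is injective
(equivalently, `i` is an isomorphism, `N = E`). -/
theorem stmt18 {A : Type u} [Category.{v} A] [Abelian A]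
    (hulls : ∀ X : A, ∃ (E : A) (i : X ⟶ E), Injective E ∧ Mono i ∧
      ∀ (Y : A) (g : E ⟶ Y), Mono (i ≫ g) → Mono g)
    (N E : A) [Injective E] (i : N ⟶ E) [Mono i]
    (hess : ∀ (Y : A) (g : E ⟶ Y), Mono (i ≫ g) → Mono g)
    (hart : IsArtinianObject (Limits.cokernel i))
    (hext : ∀ (T : A), Simple T → ∀ (Z : A) (f : N ⟶ Z) (g : Z ⟶ T) (w : f ≫ g = 0),
      (ShortComplex.mk f g w).ShortExact → ∃ r : Z ⟶ N, f ≫ r = 𝟙 N) :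
    Injective N ∧ IsIso i := by
  haveI := hart
  have hcoker : IsZero (cokernel i) := by
    by_contra hU
    obtain ⟨Tsub, hT⟩ := exists_simple_subobject hU
    haveI := hT
    set T : A := (Tsub : A)
    set a : T ⟶ cokernel i := Tsub.arrow with ha
    haveI : Mono a := inferInstance
    set g : pullback a (cokernel.π i) ⟶ T := pullback.fst a (cokernel.π i) with hg
    set s : pullback a (cokernel.π i) ⟶ E := pullback.snd a (cokernel.π i) with hs
    have hcond : g ≫ a = s ≫ cokernel.π i := pullback.condition
    set f : N ⟶ pullback a (cokernel.π i) :=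
      pullback.lift 0 i (by simp [cokernel.condition]) with hf
    have hfg : f ≫ g = 0 := by rw [hf, hg]; exact pullback.lift_fst _ _ _
    have hfs : f ≫ s = i := by rw [hf, hs]; exact pullback.lift_snd _ _ _
    haveI : Mono (f ≫ s) := by rw [hfs]; infer_instance
    haveI : Mono f := mono_of_mono f s
    haveI : Epi g := by
      rw [hg]; infer_instance
    -- the pulled back sequence `N ⟶ Z ⟶ T` is short exact
    have hlim : IsLimit (KernelFork.ofι f hfg) := by
      refine KernelFork.IsLimit.ofι f hfg
        (fun {W} t ht => Abelian.monoLift i (t ≫ s) ?_) (fun {W} t ht => ?_)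
        (fun {W} t ht m hm => ?_)
      · rw [Category.assoc, ← hcond, ← Category.assoc, ht, zero_comp]
      · apply pullback.hom_ext
        · rw [Category.assoc]
          change _ ≫ f ≫ g = _
          rw [hfg, comp_zero]
          exact ht.symm
        · rw [Category.assoc]
          change _ ≫ f ≫ s = _
          rw [hfs, Abelian.monoLift_comp]
      · apply (cancel_mono f).mp
        apply (cancel_mono s).mp
        rw [Category.assoc, Category.assoc, hfs, Abelian.monoLift_comp, ← hm, Category.assoc, hfs]
    have hse : (ShortComplex.mk f g hfg).ShortExact :=
      { exact := (ShortComplex.mk f g hfg).exact_of_f_is_kernel hlim }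
    obtain ⟨r, hr⟩ := hext T hT _ f g hfg hse
    -- the kernel of the retraction `r` is a subobject of `E` meeting `N` trivially
    set k : kernel r ⟶ pullback a (cokernel.π i) := kernel.ι r with hk
    haveI : Mono s := by rw [hs]; infer_instance
    haveI : Mono (k ≫ s) := mono_comp _ _
    have hmono : Mono (i ≫ cokernel.π (k ≫ s)) := by
      rw [Preadditive.mono_iff_cancel_zero]
      intro W t ht
      rw [← Category.assoc] at ht
      set u := Abelian.monoLift (k ≫ s) (t ≫ i) ht with hu
      have hu2 : u ≫ k ≫ s = t ≫ i := Abelian.monoLift_comp _ _ _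
      have h3 : t ≫ f = u ≫ k := by
        apply (cancel_mono s).mp
        rw [Category.assoc, Category.assoc, hfs, hu2]
      calc t = t ≫ f ≫ r := by rw [hr, Category.comp_id]
        _ = (u ≫ k) ≫ r := by rw [← Category.assoc, h3]
        _ = 0 := by rw [Category.assoc, hk, kernel.condition, comp_zero]
    haveI := hess _ _ hmono
    have hks : (k ≫ s) = 0 := by
      have h := cokernel.condition (k ≫ s)
      rwa [← zero_comp (f := cokernel.π (k ≫ s)), cancel_mono] at h
    have hk0 : k = 0 := by
      have h : k ≫ s = 0 ≫ s := by rw [hks, zero_comp]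
      exact (cancel_mono s).mp h
    haveI : Mono r := by
      rw [Preadditive.mono_iff_cancel_zero]
      intro W t ht
      have h : t = kernel.lift r t ht ≫ k := (kernel.lift_ι r t ht).symm
      rw [h, hk0, comp_zero]
    haveI : IsSplitEpi r := ⟨⟨⟨f, hr⟩⟩⟩
    haveI : IsIso r := isIso_of_mono_of_epi r
    have hg0 : g = 0 := by
      have hf' : f = inv r := by
        rw [← Category.comp_id f, ← IsIso.hom_inv_id r, ← Category.assoc, hr, Category.id_comp]
      have h2 : f ≫ g = 0 := hfg
      rw [hf'] at h2
      have h3 := congrArg (fun x => r ≫ x) h2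
      simpa [← Category.assoc] using h3
    have hepi0 : Epi (0 : pullback a (cokernel.π i) ⟶ T) := by
      have h4 : Epi g := inferInstance
      rw [hg0] at h4
      exact h4
    exact Simple.not_isZero T (@IsZero.of_epi_zero _ _ _ _ T hepi0)
  haveI : Epi i := Preadditive.epi_of_isZero_cokernel i hcoker
  haveI : IsIso i := isIso_of_mono_of_epi i
  exact ⟨Injective.of_iso (asIso i).symm inferInstance, inferInstance⟩
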